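/- Let 𝒯 be a set of bounded operators on a complex separable Hilbert space H and let {P_n}_{n∈ℕ} be a sequence of non-zero finite-rank orthogonal projections on H. Then {P_n} is a Følner sequence for 𝒯 if and only if {P_n} is a Følner sequence for C*(𝒯, 1), the unital C*-algebra generated by 𝒯 and the identity operator. -/

import Mathlib

open Filter Topology
open scoped ComplexOrder

noncomputable section

variable {H : Type*} [NormedAddCommGroup H] [InnerProductSpace ℂ H] [CompleteSpace H]

/-- `P` is a finite-rank orthogonal projection on the Hilbert space `H`. -/
def IsFinRankProj (P : H →L[ℂ] H) : Prop :=
  IsIdempotentElem P ∧ IsSelfAdjoint P ∧ FiniteDimensional ℂ (LinearMap.range (P : H →ₗ[ℂ] H))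

/-- The Hilbert–Schmidt norm of an operator, computed with respect to the Hilbert basis `b`
(for Hilbert–Schmidt operators it is independent of the choice of `b`). -/
def hsNorm {ι : Type*} (b : HilbertBasis ι ℂ H) (T : H →L[ℂ] H) : ℝ :=
  Real.sqrt (∑' i, ‖T (b i)‖ ^ 2)

/-- The canonical trace of an operator, computed with respect to the Hilbert basis `b`
(for trace-class operators it is independent of the choice of `b`). -/
def trOp {ι : Type*} (b : HilbertBasis ι ℂ H) (T : H →L[ℂ] H) : ℂ :=
  ∑' i, (inner ℂ (b i) (T (b i)) : ℂ)

/-- `{P n}` is a Følner sequence (of non-zero finite-rank orthogonal projections)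
for the set of operators `S ⊆ L(H)`. -/
def IsFolnerSeq {ι : Type*} (b : HilbertBasis ι ℂ H) (S : Set (H →L[ℂ] H))
    (P : ℕ → H →L[ℂ] H) : Prop :=
  (∀ n, IsFinRankProj (P n) ∧ P n ≠ 0) ∧
  ∀ A ∈ S, Tendsto (fun n => hsNorm b (A * P n - P n * A) / hsNorm b (P n)) atTop (𝓝 0)

/-- A proper Følner sequence: an increasing Følner sequence converging strongly to `1`. -/
def IsProperFolnerSeq {ι : Type*} (b : HilbertBasis ι ℂ H) (S : Set (H →L[ℂ] H))
    (P : ℕ → H →L[ℂ] H) : Prop :=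
  IsFolnerSeq b S P ∧ Monotone (fun n => LinearMap.range (P n : H →ₗ[ℂ] H)) ∧
    ∀ x : H, Tendsto (fun n => P n x) atTop (𝓝 x)

section AuxHS

open scoped NNReal ENNReal

set_option linter.unusedSectionVars false

variable {ι : Type*} (b : HilbertBasis ι ℂ H)

local notation "⟪" x ", " y "⟫" => @inner ℂ _ _ x y

lemma parseval' (x : H) : HasSum (fun i => ‖(⟪b i, x⟫ : ℂ)‖ ^ 2) (‖x‖ ^ 2) := by
  have h := b.hasSum_inner_mul_inner x x
  have h2 : ∀ i, (⟪x, b i⟫ : ℂ) * ⟪b i, x⟫ = ((‖(⟪b i, x⟫ : ℂ)‖ ^ 2 : ℝ) : ℂ) := by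
    intro i
    rw [← inner_conj_symm (b i) x, RCLike.mul_conj, RCLike.norm_conj]; norm_cast
  simp_rw [h2] at h
  have h3 := (Complex.reCLM : ℂ →L[ℝ] ℝ).hasSum h
  simp [← Complex.ofReal_pow, ← RCLike.re_to_complex, @inner_self_eq_norm_sq ℂ] at h3
  simpa [RCLike.re_to_complex, ← Complex.ofReal_pow, Complex.ofReal_re] using h3

lemma parseval_nn (x : H) :
    ∑' i, (‖(⟪b i, x⟫ : ℂ)‖₊ ^ 2 : ℝ≥0∞) = (‖x‖₊ ^ 2 : ℝ≥0∞) := by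
  have h : HasSum (fun i => (‖(⟪b i, x⟫ : ℂ)‖₊ ^ 2 : ℝ≥0)) (‖x‖₊ ^ 2) := by
    rw [← NNReal.hasSum_coe]
    simpa using parseval' b x
  simpa using ENNReal.tsum_coe_eq h

/-- The extended-real Hilbert–Schmidt norm squared. -/
def eHS (T : H →L[ℂ] H) : ℝ≥0∞ := ∑' i, (‖T (b i)‖₊ ^ 2 : ℝ≥0∞)

lemma summable_iff_eHS (T : H →L[ℂ] H) :
    Summable (fun i => ‖T (b i)‖ ^ 2) ↔ eHS b T ≠ ⊤ := by
  rw [show (fun i => ‖T (b i)‖ ^ 2) = (fun i => ((‖T (b i)‖₊ ^ 2 : ℝ≥0) : ℝ)) by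
    funext i; simp]
  rw [NNReal.summable_coe, ← ENNReal.tsum_coe_ne_top_iff_summable]
  rfl

lemma tsum_sq_eq_toReal (T : H →L[ℂ] H) :
    ∑' i, ‖T (b i)‖ ^ 2 = (eHS b T).toReal := by
  by_cases h : Summable (fun i => (‖T (b i)‖₊ ^ 2 : ℝ≥0))
  · have e1 := ENNReal.coe_tsum h
    have e2 : eHS b T = ∑' i, ((‖T (b i)‖₊ ^ 2 : ℝ≥0) : ℝ≥0∞) :=
      tsum_congr fun i => by push_cast; rfl
    rw [e2, ← e1, ENNReal.coe_toReal, NNReal.coe_tsum]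
    exact tsum_congr fun i => by simp
  · have h1 : ¬ Summable (fun i => ‖T (b i)‖ ^ 2) := by
      rw [show (fun i => ‖T (b i)‖ ^ 2) = (fun i => ((‖T (b i)‖₊ ^ 2 : ℝ≥0) : ℝ)) by
        funext i; simp]
      rwa [NNReal.summable_coe]
    have h2 : eHS b T = ⊤ := by
      by_contra hne
      exact h ((ENNReal.tsum_coe_ne_top_iff_summable).mp hne)
    rw [tsum_eq_zero_of_not_summable h1, h2, ENNReal.toReal_top]

lemma hsNorm_eq (T : H →L[ℂ] H) : hsNorm b T = Real.sqrt (eHS b T).toReal := by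
  rw [hsNorm, tsum_sq_eq_toReal]

lemma eHS_adjoint (T : H →L[ℂ] H) :
    eHS b (ContinuousLinearMap.adjoint T) = eHS b T := by
  have key : ∀ (S : H →L[ℂ] H) (i : ι),
      (‖S (b i)‖₊ ^ 2 : ℝ≥0∞) = ∑' j, (‖(⟪b j, S (b i)⟫ : ℂ)‖₊ ^ 2 : ℝ≥0∞) :=
    fun S i => (parseval_nn b (S (b i))).symm
  calc eHS b (ContinuousLinearMap.adjoint T)
      = ∑' j, ∑' i, (‖(⟪b i, (ContinuousLinearMap.adjoint T) (b j)⟫ : ℂ)‖₊ ^ 2 : ℝ≥0∞) := by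
        unfold eHS; exact tsum_congr fun j => key _ j
    _ = ∑' j, ∑' i, (‖(⟪b j, T (b i)⟫ : ℂ)‖₊ ^ 2 : ℝ≥0∞) := by
        refine tsum_congr fun j => tsum_congr fun i => ?_
        congr 1
        rw [← inner_conj_symm, ContinuousLinearMap.adjoint_inner_left, RCLike.nnnorm_conj]
    _ = ∑' i, ∑' j, (‖(⟪b j, T (b i)⟫ : ℂ)‖₊ ^ 2 : ℝ≥0∞) := ENNReal.tsum_comm
    _ = eHS b T := by
        unfold eHS; exact tsum_congr fun i => (key T i).symm

lemma hsNorm_adjoint (T : H →L[ℂ] H) :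
    hsNorm b (ContinuousLinearMap.adjoint T) = hsNorm b T := by
  rw [hsNorm_eq, hsNorm_eq, eHS_adjoint]

lemma summable_adjoint (T : H →L[ℂ] H) (h : Summable (fun i => ‖T (b i)‖ ^ 2)) :
    Summable (fun i => ‖(ContinuousLinearMap.adjoint T) (b i)‖ ^ 2) := by
  rw [summable_iff_eHS, eHS_adjoint]; rwa [summable_iff_eHS] at h

lemma hsNorm_nonneg (T : H →L[ℂ] H) : 0 ≤ hsNorm b T := Real.sqrt_nonneg _

lemma hsNorm_zero : hsNorm b (0 : H →L[ℂ] H) = 0 := by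
  simp [hsNorm]

lemma hsNorm_neg (T : H →L[ℂ] H) : hsNorm b (-T) = hsNorm b T := by
  simp [hsNorm]

lemma summable_comp_left (A T : H →L[ℂ] H) (hT : Summable (fun i => ‖T (b i)‖ ^ 2)) :
    Summable (fun i => ‖(A * T) (b i)‖ ^ 2) := by
  refine Summable.of_nonneg_of_le (fun i => sq_nonneg _) (fun i => ?_) (hT.mul_left (‖A‖ ^ 2))
  have h1 : ‖(A * T) (b i)‖ ≤ ‖A‖ * ‖T (b i)‖ := A.le_opNorm _
  calc ‖(A * T) (b i)‖ ^ 2 ≤ (‖A‖ * ‖T (b i)‖) ^ 2 := by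
        apply pow_le_pow_left₀ (norm_nonneg _) h1
    _ = ‖A‖ ^ 2 * ‖T (b i)‖ ^ 2 := by ring

lemma hsNorm_comp_left (A T : H →L[ℂ] H) (hT : Summable (fun i => ‖T (b i)‖ ^ 2)) :
    hsNorm b (A * T) ≤ ‖A‖ * hsNorm b T := by
  rw [hsNorm, hsNorm, ← Real.sqrt_sq (norm_nonneg A), ← Real.sqrt_mul (sq_nonneg _)]
  apply Real.sqrt_le_sqrt
  rw [← tsum_mul_left]
  refine Summable.tsum_le_tsum (fun i => ?_) (summable_comp_left b A T hT) (hT.mul_left _)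
  have h1 : ‖(A * T) (b i)‖ ≤ ‖A‖ * ‖T (b i)‖ := A.le_opNorm _
  calc ‖(A * T) (b i)‖ ^ 2 ≤ (‖A‖ * ‖T (b i)‖) ^ 2 := by
        apply pow_le_pow_left₀ (norm_nonneg _) h1
    _ = ‖A‖ ^ 2 * ‖T (b i)‖ ^ 2 := by ring

lemma adjoint_mul (T A : H →L[ℂ] H) :
    ContinuousLinearMap.adjoint (T * A)
      = ContinuousLinearMap.adjoint A * ContinuousLinearMap.adjoint T := by
  rw [← ContinuousLinearMap.star_eq_adjoint, ← ContinuousLinearMap.star_eq_adjoint,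
    ← ContinuousLinearMap.star_eq_adjoint, star_mul]

lemma summable_comp_right (A T : H →L[ℂ] H) (hT : Summable (fun i => ‖T (b i)‖ ^ 2)) :
    Summable (fun i => ‖(T * A) (b i)‖ ^ 2) := by
  rw [summable_iff_eHS, ← eHS_adjoint, adjoint_mul, ← summable_iff_eHS]
  exact summable_comp_left b _ _ (summable_adjoint b T hT)

lemma hsNorm_comp_right (A T : H →L[ℂ] H) (hT : Summable (fun i => ‖T (b i)‖ ^ 2)) :
    hsNorm b (T * A) ≤ ‖A‖ * hsNorm b T := by
  rw [← hsNorm_adjoint b (T * A), adjoint_mul, ← hsNorm_adjoint b T]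
  have := hsNorm_comp_left b (ContinuousLinearMap.adjoint A) (ContinuousLinearMap.adjoint T)
    (summable_adjoint b T hT)
  rwa [← ContinuousLinearMap.star_eq_adjoint A, norm_star] at this

lemma hsNorm_add_le (T S : H →L[ℂ] H) (hT : Summable (fun i => ‖T (b i)‖ ^ 2))
    (hS : Summable (fun i => ‖S (b i)‖ ^ 2)) :
    hsNorm b (T + S) ≤ hsNorm b T + hsNorm b S := by
  have mem : ∀ (U : H →L[ℂ] H), Summable (fun i => ‖U (b i)‖ ^ 2) →
      Memℓp (fun i => U (b i)) 2 := by
    intro U hU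
    apply memℓp_gen
    convert hU using 2 with i
    rw [ENNReal.toReal_ofNat, Real.rpow_two]
  set fT : lp (fun _ : ι => H) 2 := ⟨fun i => T (b i), mem T hT⟩
  set fS : lp (fun _ : ι => H) 2 := ⟨fun i => S (b i), mem S hS⟩
  have hTS : Summable (fun i => ‖(T + S) (b i)‖ ^ 2) := by
    refine Summable.of_nonneg_of_le (fun i => sq_nonneg _) (fun i => ?_)
      ((hT.mul_left 2).add (hS.mul_left 2))
    have h1 : ‖(T + S) (b i)‖ ≤ ‖T (b i)‖ + ‖S (b i)‖ := norm_add_le _ _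
    nlinarith [sq_nonneg (‖T (b i)‖ - ‖S (b i)‖), norm_nonneg ((T + S) (b i)),
      pow_le_pow_left₀ (norm_nonneg _) h1 2]
  have normeq : ∀ (U : H →L[ℂ] H) (hU : Summable (fun i => ‖U (b i)‖ ^ 2)),
      hsNorm b U = ‖(⟨fun i => U (b i), mem U hU⟩ : lp (fun _ : ι => H) 2)‖ := by
    intro U hU
    rw [lp.norm_eq_tsum_rpow (by norm_num) _, hsNorm, Real.sqrt_eq_rpow]
    norm_num
  have key : (⟨fun i => (T + S) (b i), mem _ hTS⟩ : lp (fun _ : ι => H) 2) = fT + fS := by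
    apply Subtype.ext
    funext i
    rfl
  rw [normeq T hT, normeq S hS, normeq (T + S) hTS, key]
  exact norm_add_le _ _

lemma summable_proj (P : H →L[ℂ] H) (hP : IsFinRankProj P) :
    Summable (fun i => ‖P (b i)‖ ^ 2) := by
  obtain ⟨hidem, hsa, hfd⟩ := hP
  set K : Submodule ℂ H := LinearMap.range (P : H →ₗ[ℂ] H) with hK
  haveI : FiniteDimensional ℂ K := hfd
  set e := stdOrthonormalBasis ℂ K with he
  have hfix : ∀ y : K, P (y : H) = (y : H) := by
    rintro ⟨y, hy⟩
    obtain ⟨z, rfl⟩ := hy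
    have := congrArg (fun Q : H →L[ℂ] H => Q z) hidem
    simpa using this
  have key : ∀ i, ‖P (b i)‖ ^ 2
      = ∑ k, ‖(inner ℂ (b i) ((e k : K) : H) : ℂ)‖ ^ 2 := by
    intro i
    have hmem : P (b i) ∈ K := LinearMap.mem_range_self _ _
    set y : K := ⟨P (b i), hmem⟩ with hy
    have h1 : ‖P (b i)‖ = ‖y‖ := rfl
    have h2 : ‖y‖ ^ 2 = ∑ k, ‖e.repr y k‖ ^ 2 := by
      rw [← e.repr.norm_map y, EuclideanSpace.norm_eq, Real.sq_sqrt]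
      positivity
    rw [h1, h2]
    refine Finset.sum_congr rfl fun k _ => ?_
    have h3 : ‖e.repr y k‖ = ‖(inner ℂ (b i) ((e k : K) : H) : ℂ)‖ := by
      rw [e.repr_apply_apply]
      have ha : (inner ℂ (e k) y : ℂ) = inner ℂ ((e k : K) : H) (P (b i)) := rfl
      have hb : (inner ℂ ((e k : K) : H) (P (b i)) : ℂ)
          = inner ℂ (P ((e k : K) : H)) (b i) := (hsa.isSymmetric _ _).symm
      rw [ha, hb, hfix (e k)]
      exact norm_inner_symm _ _
    rw [h3]
  have hsummand : ∀ k, Summable (fun i => ‖(inner ℂ (b i) ((e k : K) : H) : ℂ)‖ ^ 2) := by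
    intro k
    have := (parseval' b ((e k : K) : H)).summable
    refine this.congr fun i => ?_
    rw [norm_inner_symm]
  rw [show (fun i => ‖P (b i)‖ ^ 2)
      = fun i => ∑ k, ‖(inner ℂ (b i) ((e k : K) : H) : ℂ)‖ ^ 2 from funext key]
  exact summable_sum fun k _ => hsummand k

lemma summable_sub' (T S : H →L[ℂ] H) (hT : Summable (fun i => ‖T (b i)‖ ^ 2))
    (hS : Summable (fun i => ‖S (b i)‖ ^ 2)) :
    Summable (fun i => ‖(T - S) (b i)‖ ^ 2) := by
  refine Summable.of_nonneg_of_le (fun i => sq_nonneg _) (fun i => ?_)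
    ((hT.mul_left 2).add (hS.mul_left 2))
  have h1 : ‖(T - S) (b i)‖ ≤ ‖T (b i)‖ + ‖S (b i)‖ := norm_sub_le _ _
  nlinarith [sq_nonneg (‖T (b i)‖ - ‖S (b i)‖), norm_nonneg ((T - S) (b i)),
    pow_le_pow_left₀ (norm_nonneg _) h1 2]

lemma summable_neg' (S : H →L[ℂ] H) (hS : Summable (fun i => ‖S (b i)‖ ^ 2)) :
    Summable (fun i => ‖(-S) (b i)‖ ^ 2) := by
  refine hS.congr fun i => ?_
  simp

lemma hsNorm_sub_le (T S : H →L[ℂ] H) (hT : Summable (fun i => ‖T (b i)‖ ^ 2))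
    (hS : Summable (fun i => ‖S (b i)‖ ^ 2)) :
    hsNorm b (T - S) ≤ hsNorm b T + hsNorm b S := by
  rw [sub_eq_add_neg]
  have := hsNorm_add_le b T (-S) hT (summable_neg' b S hS)
  rwa [hsNorm_neg] at this

lemma div_le_div_right'' {a a' c : ℝ} (h : a ≤ a') (hc : 0 ≤ c) : a / c ≤ a' / c := by
  rw [div_eq_mul_inv, div_eq_mul_inv]
  exact mul_le_mul_of_nonneg_right h (inv_nonneg.2 hc)

lemma summable_comm' (A Q : H →L[ℂ] H) (hQ : Summable (fun i => ‖Q (b i)‖ ^ 2)) :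
    Summable (fun i => ‖(A * Q - Q * A) (b i)‖ ^ 2) :=
  summable_sub' b _ _ (summable_comp_left b A Q hQ) (summable_comp_right b A Q hQ)

theorem main_test
    {ι : Type*} [Countable ι] (b : HilbertBasis ι ℂ H)
    (𝒯 : Set (H →L[ℂ] H)) (P : ℕ → H →L[ℂ] H)
    (hP : ∀ n, IsFinRankProj (P n) ∧ P n ≠ 0)
    (hF : ∀ A ∈ 𝒯, Tendsto (fun n => hsNorm b (A * P n - P n * A) / hsNorm b (P n)) atTop (𝓝 0))
    (A : H →L[ℂ] H)
    (hA : A ∈ ((StarAlgebra.adjoin ℂ 𝒯).topologicalClosure : Set (H →L[ℂ] H))) :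
    Tendsto (fun n => hsNorm b (A * P n - P n * A) / hsNorm b (P n)) atTop (𝓝 0) := by
  have sQ : ∀ n, Summable (fun i => ‖P n (b i)‖ ^ 2) :=
    fun n => summable_proj b (P n) (hP n).1
  have sComm : ∀ (X : H →L[ℂ] H) n, Summable (fun i => ‖(X * P n - P n * X) (b i)‖ ^ 2) :=
    fun X n => summable_comm' b X (P n) (sQ n)
  have hbound : ∀ (X B : H →L[ℂ] H) (n : ℕ),
      hsNorm b (X * P n - P n * X) / hsNorm b (P n)
        ≤ hsNorm b (B * P n - P n * B) / hsNorm b (P n) + 2 * ‖X - B‖ := by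
    intro X B n
    have hdecomp : X * P n - P n * X
        = (B * P n - P n * B) + ((X - B) * P n - P n * (X - B)) := by noncomm_ring
    have h2 : hsNorm b ((X - B) * P n - P n * (X - B)) ≤ 2 * ‖X - B‖ * hsNorm b (P n) := by
      have ha := hsNorm_sub_le b ((X - B) * P n) (P n * (X - B))
        (summable_comp_left b _ _ (sQ n)) (summable_comp_right b _ _ (sQ n))
      have hb := hsNorm_comp_left b (X - B) (P n) (sQ n)
      have hc := hsNorm_comp_right b (X - B) (P n) (sQ n)
      linarith
    have h1 : hsNorm b (X * P n - P n * X)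
        ≤ hsNorm b (B * P n - P n * B) + 2 * ‖X - B‖ * hsNorm b (P n) := by
      rw [hdecomp]
      have := hsNorm_add_le b (B * P n - P n * B) ((X - B) * P n - P n * (X - B))
        (sComm B n) (summable_comm' b (X - B) (P n) (sQ n))
      linarith
    by_cases hc : hsNorm b (P n) = 0
    · rw [hc, div_zero, div_zero]
      positivity
    · have hcpos : 0 < hsNorm b (P n) := lt_of_le_of_ne (hsNorm_nonneg b _) (Ne.symm hc)
      calc hsNorm b (X * P n - P n * X) / hsNorm b (P n)
          ≤ (hsNorm b (B * P n - P n * B) + 2 * ‖X - B‖ * hsNorm b (P n)) / hsNorm b (P n) :=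
            div_le_div_right'' h1 hcpos.le
        _ = hsNorm b (B * P n - P n * B) / hsNorm b (P n) + 2 * ‖X - B‖ := by
            rw [add_div, mul_div_assoc, div_self hc, mul_one]
  have hadjoin : ∀ B ∈ StarAlgebra.adjoin ℂ 𝒯,
      Tendsto (fun n => hsNorm b (B * P n - P n * B) / hsNorm b (P n)) atTop (𝓝 0) := by
    intro B hB
    induction hB using StarAlgebra.adjoin_induction with
    | mem x hx => exact hF x hx
    | algebraMap r =>
        have hzero : ∀ n, (algebraMap ℂ (H →L[ℂ] H) r) * P n
            - P n * (algebraMap ℂ (H →L[ℂ] H) r) = 0 := by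
          intro n
          rw [Algebra.algebraMap_eq_smul_one, smul_mul_assoc, mul_smul_comm, one_mul,
            mul_one, sub_self]
        simp only [hzero, hsNorm_zero, zero_div]
        exact tendsto_const_nhds
    | add x y hx hy ihx ihy =>
        refine squeeze_zero (fun n => div_nonneg (hsNorm_nonneg b _) (hsNorm_nonneg b _))
          (g := fun n => hsNorm b (x * P n - P n * x) / hsNorm b (P n)
            + hsNorm b (y * P n - P n * y) / hsNorm b (P n)) (fun n => ?_) ?_
        · have hdecomp : (x + y) * P n - P n * (x + y)
              = (x * P n - P n * x) + (y * P n - P n * y) := by noncomm_ring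
          rw [hdecomp]
          have := div_le_div_right'' (hsNorm_add_le b _ _ (sComm x n) (sComm y n))
            (hsNorm_nonneg b (P n))
          simpa [add_div] using this
        · simpa using ihx.add ihy
    | mul x y hx hy ihx ihy =>
        refine squeeze_zero (fun n => div_nonneg (hsNorm_nonneg b _) (hsNorm_nonneg b _))
          (g := fun n => ‖x‖ * (hsNorm b (y * P n - P n * y) / hsNorm b (P n))
            + ‖y‖ * (hsNorm b (x * P n - P n * x) / hsNorm b (P n))) (fun n => ?_) ?_
        · have hdecomp : (x * y) * P n - P n * (x * y)
              = x * (y * P n - P n * y) + (x * P n - P n * x) * y := by noncomm_ring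
          have h1 : hsNorm b ((x * y) * P n - P n * (x * y))
              ≤ ‖x‖ * hsNorm b (y * P n - P n * y) + ‖y‖ * hsNorm b (x * P n - P n * x) := by
            rw [hdecomp]
            have ha := hsNorm_add_le b (x * (y * P n - P n * y)) ((x * P n - P n * x) * y)
              (summable_comp_left b _ _ (sComm y n)) (summable_comp_right b _ _ (sComm x n))
            have hb := hsNorm_comp_left b x _ (sComm y n)
            have hc := hsNorm_comp_right b y _ (sComm x n)
            linarith
          calc hsNorm b ((x * y) * P n - P n * (x * y)) / hsNorm b (P n)
              ≤ (‖x‖ * hsNorm b (y * P n - P n * y) + ‖y‖ * hsNorm b (x * P n - P n * x))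
                  / hsNorm b (P n) := div_le_div_right'' h1 (hsNorm_nonneg b _)
            _ = ‖x‖ * (hsNorm b (y * P n - P n * y) / hsNorm b (P n))
                + ‖y‖ * (hsNorm b (x * P n - P n * x) / hsNorm b (P n)) := by
                rw [add_div, mul_div_assoc, mul_div_assoc]
        · simpa using (ihy.const_mul ‖x‖).add (ihx.const_mul ‖y‖)
    | star x hx ih =>
        have heq : ∀ n, hsNorm b (star x * P n - P n * star x)
            = hsNorm b (x * P n - P n * x) := by
          intro n
          have h1 : star x * P n - P n * star x = -(star (x * P n - P n * x)) := by
            rw [star_sub, star_mul, star_mul, (hP n).1.2.1.star_eq, neg_sub]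
          rw [h1, hsNorm_neg, ContinuousLinearMap.star_eq_adjoint, hsNorm_adjoint]
        simp only [heq]
        exact ih
  have hA' : A ∈ closure ((StarAlgebra.adjoin ℂ 𝒯 : StarSubalgebra ℂ (H →L[ℂ] H))
      : Set (H →L[ℂ] H)) := hA
  rw [Metric.tendsto_atTop]
  intro ε hε
  obtain ⟨B, hBmem, hABdist⟩ := Metric.mem_closure_iff.mp hA' (ε / 3) (by linarith)
  have hB := hadjoin B hBmem
  rw [Metric.tendsto_atTop] at hB
  obtain ⟨N, hN⟩ := hB (ε / 3) (by linarith)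
  refine ⟨N, fun n hn => ?_⟩
  have h1 := hbound A B n
  have h2 := hN n hn
  rw [dist_zero_right, Real.norm_eq_abs] at h2 ⊢
  rw [abs_of_nonneg (div_nonneg (hsNorm_nonneg b _) (hsNorm_nonneg b _))] at h2 ⊢
  rw [dist_eq_norm] at hABdist
  linarith


end AuxHS

/-- a sequence of non-zero finite-rank orthogonal projections is a Følner
sequence for a set of operators `𝒯` iff it is a Følner sequence for the unital C*-algebra
`C*(𝒯, 1)` generated by `𝒯` and the identity. -/
theorem folnerSeq_iff_folnerSeq_generated_cstarAlgebra
    {H : Type*} [NormedAddCommGroup H] [InnerProductSpace ℂ H] [CompleteSpace H]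
    {ι : Type*} [Countable ι] (b : HilbertBasis ι ℂ H)
    (𝒯 : Set (H →L[ℂ] H)) (P : ℕ → H →L[ℂ] H)
    (hP : ∀ n, IsFinRankProj (P n) ∧ P n ≠ 0) :
    IsFolnerSeq b 𝒯 P ↔
      IsFolnerSeq b ((StarAlgebra.adjoin ℂ 𝒯).topologicalClosure : Set (H →L[ℂ] H)) P := by
  constructor
  · rintro ⟨-, hF⟩
    exact ⟨hP, fun A hA => main_test b 𝒯 P hP hF A hA⟩
  · rintro ⟨-, hF⟩
    refine ⟨hP, fun A hA => hF A ?_⟩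
    exact subset_closure (StarAlgebra.subset_adjoin ℂ 𝒯 hA)
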